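/- Let A be a unital prime C*-algebra with nonzero socle and a ∈ A. If for every rank-one element u ∈ A there exist nonzero x ∈ uA and nonzero y ∈ Au with x ≤◇ a and y ≤◇ a, then a is invertible. -/

import Mathlib

/-- The diamond relation: `a ≤◇ b` iff `aA ⊆ bA`, `Aa ⊆ Ab`, and `a a* a = a b* a`. -/
def Diamond {A : Type*} [CStarAlgebra A] (a b : A) : Prop :=
  (∀ x : A, ∃ y : A, a * x = b * y) ∧
  (∀ x : A, ∃ y : A, x * a = y * b) ∧
  a * star a * a = a * star b * a

/-- A nonzero element `u` is rank-one iff `uAu = ℂu`. -/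
def IsRankOne {A : Type*} [CStarAlgebra A] (u : A) : Prop :=
  u ≠ 0 ∧ ∀ x : A, ∃ c : ℂ, u * x * u = c • u

noncomputable section RankOneDiamondAux

/-- A bundled minimal projection in a C*-algebra. -/
structure MinProj (A : Type*) [CStarAlgebra A] where
  e : A
  proj : e * e = e
  star_eq : star e = e
  ne : e ≠ 0
  rank : ∀ z : A, ∃ c : ℂ, e * z * e = c • e

namespace MinProj

variable {A : Type*} [CStarAlgebra A] (p : MinProj A)

lemma norm_e : ‖p.e‖ = 1 := by
  have h1 : ‖p.e‖ * ‖p.e‖ = ‖p.e‖ := by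
    conv_rhs => rw [← p.proj]
    rw [← CStarRing.norm_star_mul_self (x := p.e), p.star_eq]
  have h2 : ‖p.e‖ ≠ 0 := norm_ne_zero_iff.mpr p.ne
  field_simp at h1
  tauto

/-- The Hilbert space `A e` as a submodule of `A`. -/
def H : Submodule ℂ A where
  carrier := {x | x * p.e = x}
  add_mem' := by intro x y hx hy; simp only [Set.mem_setOf_eq] at *; rw [add_mul, hx, hy]
  zero_mem' := by simp
  smul_mem' := by intro c x hx; simp only [Set.mem_setOf_eq] at *; rw [smul_mul_assoc, hx]

lemma mem_H_iff {x : A} : x ∈ p.H ↔ x * p.e = x := Iff.rfl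

lemma isClosed_H : IsClosed (p.H : Set A) :=
  isClosed_eq (continuous_id.mul continuous_const) continuous_id

instance : CompleteSpace p.H := p.isClosed_H.completeSpace_coe

/-- The scalar `c` such that `e z e = c • e`. -/
def kappa (z : A) : ℂ := (p.rank z).choose

lemma kappa_spec (z : A) : p.e * z * p.e = p.kappa z • p.e := (p.rank z).choose_spec

lemma smul_e_cancel {c d : ℂ} (h : c • p.e = d • p.e) : c = d := by
  by_contra hcd
  apply p.ne
  have h2 : (c - d) • p.e = 0 := by rw [sub_smul, h, sub_self]
  rcases smul_eq_zero.mp h2 with h3 | h3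
  · exact absurd (sub_eq_zero.mp h3) hcd
  · exact h3

lemma kappa_unique {z : A} {c : ℂ} (h : p.e * z * p.e = c • p.e) : p.kappa z = c :=
  p.smul_e_cancel (by rw [← p.kappa_spec z, h])

/-- The inner product on `A e`. -/
def ip (v w : A) : ℂ := p.kappa (star v * w)

lemma star_mem_left {v : A} (hv : v * p.e = v) : p.e * star v = star v := by
  conv_rhs => rw [← hv]
  rw [star_mul, p.star_eq]

lemma ip_spec {v w : A} (hv : v * p.e = v) (hw : w * p.e = w) :
    star v * w = p.ip v w • p.e := by
  have key : p.e * (star v * w) * p.e = star v * w := by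
    rw [← mul_assoc, p.star_mem_left hv, mul_assoc, hw]
  rw [ip, ← p.kappa_spec (star v * w), key]

lemma ip_unique {v w : A} (hv : v * p.e = v) (hw : w * p.e = w) {c : ℂ}
    (h : star v * w = c • p.e) : p.ip v w = c := by
  apply p.smul_e_cancel
  rw [← p.ip_spec hv hw, h]

lemma ip_self {v : A} (hv : v * p.e = v) : p.ip v v = ((‖v‖ ^ 2 : ℝ) : ℂ) := by
  set c := p.ip v v with hc
  have hvv : star v * v = c • p.e := p.ip_spec hv hv
  -- the absolute value of c is ‖v‖²
  have habs : ‖c‖ = ‖v‖ ^ 2 := by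
    have h1 : ‖star v * v‖ = ‖v‖ ^ 2 := by
      rw [CStarRing.norm_star_mul_self, sq]
    rw [hvv, norm_smul, p.norm_e, mul_one] at h1
    exact h1
  -- c is real
  have hreal : (starRingEnd ℂ) c = c := by
    have h1 := congrArg star hvv
    rw [star_mul, star_star, star_smul, p.star_eq] at h1
    rw [hvv] at h1
    exact (p.smul_e_cancel h1).symm
  have him : c.im = 0 := Complex.conj_eq_iff_im.mp hreal
  -- c is nonneg
  have hre : 0 ≤ c.re := by
    by_contra hneg
    push_neg at hneg
    letI := CStarAlgebra.spectralOrder A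
    haveI := CStarAlgebra.spectralOrderedRing A
    have h1 : 0 ≤ c • p.e := hvv ▸ star_mul_self_nonneg v
    set t : ℝ := Real.sqrt (-c.re) with ht
    have h2 : star ((t : ℂ) • p.e) * ((t : ℂ) • p.e) = -(c • p.e) := by
      rw [star_smul, p.star_eq, smul_mul_assoc, mul_smul_comm, p.proj, smul_smul]
      rw [← neg_smul]
      congr 1
      rw [Complex.star_def, Complex.conj_ofReal, ← Complex.ofReal_mul,
        Real.mul_self_sqrt (by linarith)]
      rw [Complex.ext_iff]
      constructor <;> simp [him]
    have h3 : c • p.e ≤ 0 := by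
      rw [← neg_nonneg, ← h2]
      exact star_mul_self_nonneg _
    have h4 : c • p.e = 0 := le_antisymm h3 h1
    rcases smul_eq_zero.mp h4 with h5 | h5
    · rw [h5] at hneg; simp at hneg
    · exact p.ne h5
  -- conclude
  have : c = (c.re : ℂ) := by rw [Complex.ext_iff]; simp [him]
  rw [this]
  norm_cast
  rw [this, Complex.norm_real, Real.norm_eq_abs, abs_of_nonneg hre] at habs
  exact habs

lemma ip_self_ne_zero {v : A} (hv : v * p.e = v) (hv0 : v ≠ 0) : p.ip v v ≠ 0 := by
  rw [p.ip_self hv]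
  simpa using pow_ne_zero 2 (norm_ne_zero_iff.mpr hv0)

instance : Inner ℂ p.H := ⟨fun v w => p.ip v.1 w.1⟩

lemma inner_def (v w : p.H) : (inner ℂ v w : ℂ) = p.ip v.1 w.1 := rfl

instance : InnerProductSpace ℂ p.H :=
  { (inferInstance : NormedSpace ℂ p.H) with
    inner := fun v w => p.ip v.1 w.1
    norm_sq_eq_re_inner := by
      intro x
      have := p.ip_self x.2
      show ‖x.1‖ ^ 2 = RCLike.re (p.ip x.1 x.1)
      rw [this]
      exact (Complex.ofReal_re _).symm
    conj_inner_symm := by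
      intro x y
      show (starRingEnd ℂ) (p.ip y.1 x.1) = p.ip x.1 y.1
      apply (p.ip_unique x.2 y.2 _).symm
      have h1 := congrArg star (p.ip_spec y.2 x.2)
      rw [star_mul, star_star, star_smul, p.star_eq] at h1
      exact h1
    add_left := by
      intro x y z
      show p.ip (x.1 + y.1) z.1 = p.ip x.1 z.1 + p.ip y.1 z.1
      apply p.ip_unique (by rw [add_mul, x.2, y.2]) z.2
      rw [star_add, add_mul, p.ip_spec x.2 z.2, p.ip_spec y.2 z.2, add_smul]
    smul_left := by
      intro x y r
      show p.ip (r • x.1) y.1 = (starRingEnd ℂ) r * p.ip x.1 y.1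
      apply p.ip_unique (by rw [smul_mul_assoc, x.2]) y.2
      rw [star_smul, smul_mul_assoc, p.ip_spec x.2 y.2, smul_smul, Complex.star_def] }

/-- Left multiplication by `z` as a continuous linear map on `A e`. -/
def mulCLM (z : A) : p.H →L[ℂ] p.H :=
  LinearMap.mkContinuous
    { toFun := fun h => ⟨z * h.1, by
        rw [mem_H_iff, mul_assoc, h.2]⟩
      map_add' := fun h g => Subtype.ext (mul_add z h.1 g.1)
      map_smul' := fun c h => Subtype.ext (mul_smul_comm c z h.1) }
    ‖z‖ (fun h => by
      show ‖z * h.1‖ ≤ ‖z‖ * ‖h.1‖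
      exact norm_mul_le z h.1)

@[simp] lemma mulCLM_apply (z : A) (h : p.H) : (p.mulCLM z h).1 = z * h.1 := rfl

/-- The left regular representation of `A` on `A e` as a star algebra homomorphism. -/
def piRep : A →⋆ₐ[ℂ] (p.H →L[ℂ] p.H) where
  toFun := p.mulCLM
  map_one' := by ext h; exact one_mul h.1
  map_mul' z w := by
    ext h
    show (z * w) * h.1 = z * (w * h.1)
    rw [mul_assoc]
  map_zero' := by ext h; exact zero_mul h.1
  map_add' z w := by ext h; exact add_mul z w h.1
  commutes' c := by
    ext h
    show (algebraMap ℂ A c) * h.1 = ((algebraMap ℂ (p.H →L[ℂ] p.H) c) h).1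
    rw [Algebra.algebraMap_eq_smul_one, Algebra.algebraMap_eq_smul_one, smul_mul_assoc, one_mul]
    rfl
  map_star' z := by
    rw [ContinuousLinearMap.star_eq_adjoint]
    apply (ContinuousLinearMap.eq_adjoint_iff _ _).mpr
    intro x y
    show p.ip (star z * x.1) y.1 = p.ip x.1 (z * y.1)
    have hx : (star z * x.1) * p.e = star z * x.1 := by rw [mul_assoc, x.2]
    have hy : (z * y.1) * p.e = z * y.1 := by rw [mul_assoc, y.2]
    apply p.ip_unique hx y.2
    rw [star_mul, star_star, mul_assoc]
    exact p.ip_spec x.2 hy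

lemma piRep_apply (z : A) (h : p.H) : (p.piRep z h).1 = z * h.1 := rfl

lemma piRep_injective
    (hprime : ∀ x y : A, (∀ z : A, x * z * y = 0) → x = 0 ∨ y = 0) :
    Function.Injective p.piRep := by
  intro z w hzw
  rw [← sub_eq_zero]
  have h0 : p.piRep (z - w) = 0 := by rw [map_sub, hzw, sub_self]
  have hz : ∀ t : A, (z - w) * t * p.e = 0 := by
    intro t
    have ht : (t * p.e) * p.e = t * p.e := by rw [mul_assoc, p.proj]
    have h2 : p.piRep (z - w) ⟨t * p.e, ht⟩ = 0 := by rw [h0]; rfl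
    have h3 := congrArg Subtype.val h2
    rw [piRep_apply] at h3
    rw [mul_assoc]
    simpa using h3
  rcases hprime (z - w) p.e hz with h | h
  · exact h
  · exact absurd h p.ne

lemma rankOne_mul_star {v w : A} (hv : v * p.e = v) (hv0 : v ≠ 0)
    (hw : w * p.e = w) (hw0 : w ≠ 0) : IsRankOne (v * star w) := by
  constructor
  · intro hvw
    apply hv0
    have h1 : v * star w * w = 0 := by rw [hvw, zero_mul]
    rw [mul_assoc, p.ip_spec hw hw, mul_smul_comm, hv] at h1
    rcases smul_eq_zero.mp h1 with h2 | h2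
    · exact absurd h2 (p.ip_self_ne_zero hw hw0)
    · exact h2
  · intro z
    have hzv : (z * v) * p.e = z * v := by rw [mul_assoc, hv]
    refine ⟨p.ip w (z * v), ?_⟩
    have h2 : star w * (z * (v * star w)) = p.ip w (z * v) • star w := by
      rw [show z * (v * star w) = (z * v) * star w by rw [mul_assoc], ← mul_assoc,
        p.ip_spec hw hzv, smul_mul_assoc, p.star_mem_left hw]
    calc v * star w * z * (v * star w) = v * (star w * (z * (v * star w))) := by
          simp only [mul_assoc]
      _ = p.ip w (z * v) • (v * star w) := by rw [h2, mul_smul_comm]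

end MinProj

/-- Construction of a minimal projection from a rank-one element. -/
lemma exists_minProj {A : Type*} [CStarAlgebra A] {u : A} (hu : IsRankOne u) :
    Nonempty (MinProj A) := by
  obtain ⟨hu0, hur⟩ := hu
  obtain ⟨c, hc⟩ := hur (star u)
  set y : A := star u * u with hy
  have hystar : star y = y := by rw [hy, star_mul, star_star]
  have hy0 : y ≠ 0 := fun h => hu0 ((CStarRing.star_mul_self_eq_zero_iff u).mp h)
  have hyy : y * y = c • y := by
    rw [hy]
    calc star u * u * (star u * u) = star u * (u * star u * u) := by simp only [mul_assoc]
      _ = star u * (c • u) := by rw [hc]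
      _ = c • (star u * u) := by rw [mul_smul_comm]
  have hcreal : (starRingEnd ℂ) c = c := by
    have h1 := congrArg star hyy
    rw [star_mul, hystar, star_smul, hystar, Complex.star_def] at h1
    -- h1 : y * y = conj c • y
    rw [hyy] at h1
    have h2 : (c - (starRingEnd ℂ) c) • y = 0 := by rw [sub_smul, h1, sub_self]
    rcases smul_eq_zero.mp h2 with h3 | h3
    · exact (sub_eq_zero.mp h3).symm
    · exact absurd h3 hy0
  have hc0 : c ≠ 0 := by
    intro h
    rw [h, zero_smul] at hyy
    apply hy0
    have : ‖y‖ * ‖y‖ = 0 := by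
      rw [← CStarRing.norm_star_mul_self (x := y), hystar, hyy, norm_zero]
    rcases mul_eq_zero.mp this with h2 | h2 <;> exact norm_eq_zero.mp h2
  refine ⟨⟨c⁻¹ • y, ?_, ?_, ?_, ?_⟩⟩
  · rw [smul_mul_assoc, mul_smul_comm, hyy, smul_smul, smul_smul]
    congr 1
    field_simp
  · rw [star_smul, hystar, star_inv₀, Complex.star_def, hcreal]
  · exact smul_ne_zero (inv_ne_zero hc0) hy0
  · intro z
    obtain ⟨d, hd⟩ := hur (z * star u)
    refine ⟨c⁻¹ * c⁻¹ * c * d, ?_⟩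
    have h1 : y * z * y = d • y := by
      rw [hy]
      calc star u * u * z * (star u * u) = star u * (u * (z * star u) * u) := by
            simp only [mul_assoc]
        _ = star u * (d • u) := by rw [hd]
        _ = d • (star u * u) := by rw [mul_smul_comm]
    calc (c⁻¹ • y) * z * (c⁻¹ • y) = (c⁻¹ * c⁻¹) • (y * z * y) := by
          rw [smul_mul_assoc, smul_mul_assoc, mul_smul_comm, smul_smul]
      _ = (c⁻¹ * c⁻¹ * d) • y := by rw [h1, smul_smul]
      _ = (c⁻¹ * c⁻¹ * c * d) • (c⁻¹ • y) := by
          rw [smul_smul]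
          congr 1
          field_simp

end RankOneDiamondAux

set_option maxHeartbeats 1000000

theorem invertible_of_rankOne_diamond {A : Type*} [CStarAlgebra A]
    (hprime : ∀ x y : A, (∀ z : A, x * z * y = 0) → x = 0 ∨ y = 0)
    (hsoc : ∃ u : A, IsRankOne u)
    (a : A)
    (h : ∀ u : A, IsRankOne u →
      (∃ x : A, x ≠ 0 ∧ (∃ r : A, x = u * r) ∧ Diamond x a) ∧
      (∃ y : A, y ≠ 0 ∧ (∃ l : A, y = l * u) ∧ Diamond y a)) :
    IsUnit a := by
  classical
  obtain ⟨u, hu⟩ := hsoc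
  obtain ⟨p⟩ := exists_minProj hu
  -- surjectivity of left multiplication by `a` on `A e`
  have hsurj_a : ∀ v : A, v * p.e = v → ∃ g : A, g * p.e = g ∧ a * g = v := by
    intro v hv
    rcases eq_or_ne v 0 with rfl | hv0
    · exact ⟨0, by simp⟩
    have hrank : IsRankOne v := by
      have := p.rankOne_mul_star hv hv0 (by rw [p.proj]) p.ne
      rwa [p.star_eq, hv] at this
    obtain ⟨⟨x, hx0, ⟨r, hxr⟩, hd1, _, _⟩, -⟩ := h v hrank
    obtain ⟨s, hs⟩ := hd1 1
    rw [mul_one] at hs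
    -- x = v * r = v * star n with n = star r * e ∈ H
    set n : A := star r * p.e with hn
    have hnH : n * p.e = n := by rw [hn, mul_assoc, p.proj]
    have hstarn : v * star n = x := by
      rw [hn, star_mul, star_star, p.star_eq, ← mul_assoc, hv, ← hxr]
    have hxn : x * n = p.ip n n • v := by
      rw [← hstarn, mul_assoc, p.ip_spec hnH hnH, mul_smul_comm, hv]
    have hn0 : n ≠ 0 := by
      intro h0
      apply hx0
      rw [← hstarn, h0, star_zero, mul_zero]
    have hip : p.ip n n ≠ 0 := p.ip_self_ne_zero hnH hn0
    refine ⟨(p.ip n n)⁻¹ • (s * n), ?_, ?_⟩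
    · rw [smul_mul_assoc, mul_assoc, hnH]
    · rw [mul_smul_comm, ← mul_assoc, ← hs, hxn, smul_smul, inv_mul_cancel₀ hip, one_smul]
  -- surjectivity of left multiplication by `star a` on `A e`
  have hsurj_astar : ∀ w : A, w * p.e = w → ∃ g : A, g * p.e = g ∧ star a * g = w := by
    intro w hw
    rcases eq_or_ne w 0 with rfl | hw0
    · exact ⟨0, by simp⟩
    have hsw0 : star w ≠ 0 := star_ne_zero.mpr hw0
    have hrank : IsRankOne (star w) := by
      have := p.rankOne_mul_star (v := p.e) (by rw [p.proj]) p.ne hw hw0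
      rwa [p.star_mem_left hw] at this
    obtain ⟨-, ⟨y, hy0, ⟨l, hyl⟩, _, hd2, _⟩⟩ := h (star w) hrank
    obtain ⟨t, ht⟩ := hd2 1
    rw [one_mul] at ht
    -- y = l * star w = m * star w with m = l * e ∈ H
    set m : A := l * p.e with hm
    have hmH : m * p.e = m := by rw [hm, mul_assoc, p.proj]
    have hym : m * star w = y := by
      rw [hm, mul_assoc, p.star_mem_left hw, ← hyl]
    have hmy : star m * y = p.ip m m • star w := by
      rw [← hym, ← mul_assoc, p.ip_spec hmH hmH, smul_mul_assoc, p.star_mem_left hw]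
    have hm0 : m ≠ 0 := by
      intro h0
      apply hy0
      rw [← hym, h0, zero_mul]
    have hip : p.ip m m ≠ 0 := p.ip_self_ne_zero hmH hm0
    refine ⟨(star ((p.ip m m)⁻¹)) • (star t * m), ?_, ?_⟩
    · rw [smul_mul_assoc, mul_assoc, hmH]
    · have key : star w = (p.ip m m)⁻¹ • (star m * (t * a)) := by
        rw [← ht, hmy, smul_smul, inv_mul_cancel₀ hip, one_smul]
      have key2 := congrArg star key
      rw [star_star, star_smul, star_mul, star_mul, star_star] at key2
      rw [key2, mul_smul_comm]
      simp only [mul_assoc]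
  -- the representation
  have hinj : Function.Injective p.piRep := p.piRep_injective hprime
  -- left multiplication by `a` is bijective on `A e`
  have hLinj : Function.Injective (p.piRep a) := by
    intro x y hxy
    have h0 : p.piRep a (x - y) = 0 := by rw [map_sub, hxy, sub_self]
    have h0' : a * (x.1 - y.1) = 0 := by
      have := congrArg Subtype.val h0
      rw [p.piRep_apply] at this
      simpa using this
    have hmem : (x.1 - y.1) * p.e = x.1 - y.1 := by rw [sub_mul, x.2, y.2]
    obtain ⟨g, hgH, hg⟩ := hsurj_astar (x.1 - y.1) hmem
    have : star (x.1 - y.1) * (x.1 - y.1) = 0 := by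
      nth_rewrite 1 [← hg]
      rw [star_mul, star_star, mul_assoc, h0', mul_zero]
    have hxy0 : x.1 - y.1 = 0 := (CStarRing.star_mul_self_eq_zero_iff _).mp this
    exact Subtype.ext (sub_eq_zero.mp hxy0)
  have hLsurj : Function.Surjective (p.piRep a) := by
    intro v
    obtain ⟨g, hgH, hg⟩ := hsurj_a v.1 v.2
    exact ⟨⟨g, hgH⟩, Subtype.ext hg⟩
  -- hence `piRep a` is a unit in B(H)
  have hUnitB : IsUnit (p.piRep a) := by
    set eqv : p.H ≃L[ℂ] p.H :=
      ContinuousLinearEquiv.ofBijective (p.piRep a)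
        (LinearMap.ker_eq_bot.mpr hLinj)
        (LinearMap.range_eq_top.mpr hLsurj) with heqv
    have hcoe : ⇑eqv = ⇑(p.piRep a) := by
      rw [heqv, ContinuousLinearEquiv.coeFn_ofBijective]
    refine ⟨⟨p.piRep a, (eqv.symm : p.H →L[ℂ] p.H), ?_, ?_⟩, rfl⟩
    · ext v
      simp only [ContinuousLinearMap.mul_apply, ContinuousLinearMap.one_apply,
        ContinuousLinearEquiv.coe_coe]
      have h2 : eqv (eqv.symm v) = v := eqv.apply_symm_apply v
      rw [hcoe] at h2
      rw [h2]
    · ext v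
      simp only [ContinuousLinearMap.mul_apply, ContinuousLinearMap.one_apply,
        ContinuousLinearEquiv.coe_coe]
      have h2 : eqv.symm (eqv v) = v := eqv.symm_apply_apply v
      rw [hcoe] at h2  -- hcoe rewrites eqv applied inside? eqv v term: ⇑eqv v
      rw [h2]
  -- spectral permanence
  set S : StarSubalgebra ℂ (p.H →L[ℂ] p.H) := p.piRep.range with hS
  haveI hSclosed : IsClosed (S : Set (p.H →L[ℂ] p.H)) := by
    have hiso : Isometry p.piRep := NonUnitalStarAlgHom.isometry p.piRep hinj
    have : (S : Set (p.H →L[ℂ] p.H)) = Set.range p.piRep := by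
      ext T
      constructor
      · rintro ⟨b, rfl⟩; exact ⟨b, rfl⟩
      · rintro ⟨b, rfl⟩; exact ⟨b, rfl⟩
    rw [this]
    exact hiso.isClosedEmbedding.isClosed_range
  have haS : p.piRep a ∈ S := ⟨a, rfl⟩
  have hUnitS : IsUnit (⟨p.piRep a, haS⟩ : S) := (S.coe_isUnit (a := ⟨p.piRep a, haS⟩)).mp hUnitB
  obtain ⟨w, hw⟩ := hUnitS
  obtain ⟨b, hb'⟩ : ∃ b, p.piRep b = ((↑w⁻¹ : S) : p.H →L[ℂ] p.H) := (↑w⁻¹ : S).2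
  have hab : a * b = 1 := by
    apply hinj
    rw [map_mul, map_one, hb']
    have h1 : ((↑(↑(w * w⁻¹) : S) : p.H →L[ℂ] p.H)) = 1 := by
      rw [mul_inv_cancel]
      exact OneMemClass.coe_one S
    calc p.piRep a * ((↑w⁻¹ : S) : p.H →L[ℂ] p.H)
        = ((↑w : S) : p.H →L[ℂ] p.H) * ((↑w⁻¹ : S) : p.H →L[ℂ] p.H) := by rw [hw]
      _ = (↑(↑(w * w⁻¹) : S) : p.H →L[ℂ] p.H) := by
          rw [Units.val_mul, MulMemClass.coe_mul]
      _ = 1 := h1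
  have hba : b * a = 1 := by
    apply hinj
    rw [map_mul, map_one, hb']
    have h1 : ((↑(↑(w⁻¹ * w) : S) : p.H →L[ℂ] p.H)) = 1 := by
      rw [inv_mul_cancel]
      exact OneMemClass.coe_one S
    calc ((↑w⁻¹ : S) : p.H →L[ℂ] p.H) * p.piRep a
        = ((↑w⁻¹ : S) : p.H →L[ℂ] p.H) * ((↑w : S) : p.H →L[ℂ] p.H) := by rw [hw]
      _ = (↑(↑(w⁻¹ * w) : S) : p.H →L[ℂ] p.H) := by
          rw [Units.val_mul, MulMemClass.coe_mul]
      _ = 1 := h1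
  exact ⟨⟨a, b, hab, hba⟩, rfl⟩
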